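/- arXiv:2411.16283 — 7 statements merged into one kernel-verified Lean document; each statement's English description precedes it below -/
import Mathlib

section
/- Let a, b be positive integers with ab ≥ 4, and define vectors g_m = (α_m, β_m) ∈ ℝ² for m ≥ 1 by g_1 = (-1, 0), g_2 = (0, -1), and g_{m+2} = -g_m + a·g_{m+1} if m is odd, g_{m+2} = -g_m + b·g_{m+1} if m is even. Then the slopes β_m/α_m (for m ≥ 3, where α_m > 0) converge to -(ab + √(ab(ab-4)))/(2b) as m → ∞. -/
open Filter

noncomputable def eseq (c : ℝ) : ℕ → ℝ
  | 0 => 0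
  | 1 => 1
  | (k+2) => (c-2) * eseq c (k+1) - eseq c k

lemma eseq_zero (c : ℝ) : eseq c 0 = 0 := rfl
lemma eseq_one (c : ℝ) : eseq c 1 = 1 := rfl
lemma eseq_rec (c : ℝ) (k : ℕ) : eseq c (k+2) = (c-2) * eseq c (k+1) - eseq c k := rfl

lemma div_div_same' (x y e : ℝ) (he : e ≠ 0) : (x/e)/(y/e) = x/y := by
  rcases eq_or_ne y 0 with h|h
  · simp [h]
  · field_simp

lemma eseq_bounds (c : ℝ) (hc : 4 ≤ c) (k : ℕ) :
    0 < eseq c (k+1) ∧ 0 ≤ eseq c k ∧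
      eseq c k ≤ (c - 2 - Real.sqrt (c*(c-4)))/2 * eseq c (k+1) := by
  have hs0 : 0 ≤ Real.sqrt (c*(c-4)) := Real.sqrt_nonneg _
  have hs2 : Real.sqrt (c*(c-4))^2 = c*(c-4) := Real.sq_sqrt (by nlinarith)
  set s := Real.sqrt (c*(c-4)) with hsdef
  have hslt : s < c - 2 := by nlinarith
  have hμpos : 0 < (c-2-s)/2 := by linarith
  have hμeq : ((c-2-s)/2)^2 - (c-2)*((c-2-s)/2) + 1 = 0 := by nlinarith
  induction k with
  | zero =>
    refine ⟨by rw [eseq_one]; norm_num, by rw [eseq_zero], ?_⟩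
    rw [eseq_zero, eseq_one]; nlinarith
  | succ k ih =>
    obtain ⟨h1, h2, h3⟩ := ih
    refine ⟨?_, le_of_lt h1, ?_⟩
    · rw [eseq_rec]; nlinarith
    · rw [eseq_rec]
      nlinarith [mul_le_mul_of_nonneg_left h3 hμpos.le]

lemma ratio_tendsto (c : ℝ) (hc : 4 ≤ c) :
    Tendsto (fun k => eseq c k / eseq c (k+1)) atTop
      (nhds ((c - 2 - Real.sqrt (c*(c-4)))/2)) := by
  have hs0 : 0 ≤ Real.sqrt (c*(c-4)) := Real.sqrt_nonneg _
  have hs2 : Real.sqrt (c*(c-4))^2 = c*(c-4) := Real.sq_sqrt (by nlinarith)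
  set s := Real.sqrt (c*(c-4)) with hsdef
  set μ := (c-2-s)/2 with hμdef
  have hslt : s < c - 2 := by nlinarith
  have hμpos : 0 < μ := by rw [hμdef]; linarith
  have hμeq : μ^2 - (c-2)*μ + 1 = 0 := by rw [hμdef]; nlinarith
  have hμlt : μ < c - 2 := by rw [hμdef]; linarith
  set r := fun k => eseq c k / eseq c (k+1) with hrdef
  have hb := eseq_bounds c hc
  have hrle : ∀ k, r k ≤ μ := by
    intro k
    have h3 := (hb k).2.2
    rw [← hsdef, ← hμdef] at h3
    exact (div_le_iff₀ (hb k).1).2 (by linarith)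
  have hrnn : ∀ k, 0 ≤ r k := fun k => div_nonneg (hb k).2.1 (hb k).1.le
  have hfe : ∀ k, r (k+1) = 1 / ((c-2) - r k) := by
    intro k
    have h1 := (hb k).1
    have h2 := (hb (k+1)).1
    have hd : (c-2) - r k = eseq c (k+2) / eseq c (k+1) := by
      simp only [hrdef]
      rw [eseq_rec]
      field_simp
    rw [hd, one_div_div]
  have hmono : Monotone r := by
    apply monotone_nat_of_le_succ
    have step : ∀ k, r k ≤ r (k+1) := by
      intro k
      induction k with
      | zero =>
        have : r 0 = 0 := by simp [hrdef, eseq_zero]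
        rw [this]; exact hrnn 1
      | succ k ih =>
        rw [hfe k, hfe (k+1)]
        apply one_div_le_one_div_of_le
        · linarith [hrle (k+1)]
        · linarith
    exact step
  have hbdd : BddAbove (Set.range r) := ⟨μ, by rintro x ⟨k, rfl⟩; exact hrle k⟩
  have hconv : Tendsto r atTop (nhds (⨆ k, r k)) := tendsto_atTop_ciSup hmono hbdd
  set L := ⨆ k, r k with hLdef
  have hLμ : L ≤ μ := ciSup_le hrle
  have hLne : (c-2) - L ≠ 0 := by
    have : 0 < (c-2) - L := by linarith
    exact this.ne'
  have h2 : Tendsto (fun k => r (k+1)) atTop (nhds L) :=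
    hconv.comp (tendsto_add_atTop_nat 1)
  have h3 : Tendsto (fun k => 1/((c-2) - r k)) atTop (nhds (1/((c-2) - L))) :=
    Tendsto.div tendsto_const_nhds (tendsto_const_nhds.sub hconv) hLne
  have heq : L = 1/((c-2) - L) :=
    tendsto_nhds_unique (h2.congr (fun k => hfe k)) h3
  have hquad : L * ((c-2) - L) = 1 := (eq_div_iff hLne).1 heq
  have hLeq : L = μ := by
    have hfac : (L - μ) * (L - ((c-2) - μ)) = 0 := by nlinarith
    rcases mul_eq_zero.1 hfac with h | h
    · linarith
    · have hμval : μ = (c-2-s)/2 := hμdef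
      have : s ≤ 0 := by linarith
      have hs : s = 0 := le_antisymm this hs0
      rw [hμval, hs] at *
      linarith
  rw [← hLeq]
  exact hconv

theorem stmt_5 (a b : ℤ) (ha : 0 < a) (hb : 0 < b) (hab : 4 ≤ a * b)
    (g : ℕ → ℝ × ℝ)
    (h1 : g 1 = (-1, 0)) (h2 : g 2 = (0, -1))
    (hodd : ∀ m, 1 ≤ m → Odd m → g (m + 2) = -g m + (a : ℝ) • g (m + 1))
    (heven : ∀ m, 1 ≤ m → Even m → g (m + 2) = -g m + (b : ℝ) • g (m + 1)) :
    Filter.Tendsto (fun m : ℕ => (g m).2 / (g m).1) Filter.atTop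
      (nhds (-(((a : ℝ) * b + Real.sqrt ((a * b) * (a * b - 4))) / (2 * b)))) := by
  have hbR : (0:ℝ) < (b:ℝ) := by exact_mod_cast hb
  have hb0 : (b:ℝ) ≠ 0 := hbR.ne'
  have hc : (4:ℝ) ≤ (a:ℝ) * (b:ℝ) := by
    have : ((4:ℤ):ℝ) ≤ ((a*b : ℤ):ℝ) := by exact_mod_cast hab
    push_cast at this; linarith
  set E := eseq ((a:ℝ) * (b:ℝ)) with hEdef
  -- closed form for g
  have hg : ∀ k : ℕ, g (2*k+1) = (((a:ℝ)*(b:ℝ)-1) * E k - E (k+1), -(a:ℝ) * E k)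
      ∧ g (2*k+2) = ((b:ℝ) * E k, -E k - E (k+1)) := by
    intro k
    induction k with
    | zero =>
      constructor
      · show g 1 = _
        rw [h1, hEdef]
        rw [show eseq ((a:ℝ)*(b:ℝ)) 0 = 0 from rfl, show eseq ((a:ℝ)*(b:ℝ)) 1 = 1 from rfl]
        norm_num
      · show g 2 = _
        rw [h2, hEdef]
        rw [show eseq ((a:ℝ)*(b:ℝ)) 0 = 0 from rfl, show eseq ((a:ℝ)*(b:ℝ)) 1 = 1 from rfl]
        norm_num
    | succ k ih =>
      obtain ⟨ih1, ih2⟩ := ih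
      have ho := hodd (2*k+1) (by omega) ⟨k, by ring⟩
      have hre : 2*k+1+1 = 2*k+2 := by ring
      rw [hre] at ho
      have hodd' : g (2*(k+1)+1) = (((a:ℝ)*(b:ℝ)-1) * E (k+1) - E (k+2), -(a:ℝ) * E (k+1)) := by
        rw [show 2*(k+1)+1 = 2*k+1+2 by ring, ho, ih1, ih2]
        have := eseq_rec ((a:ℝ)*(b:ℝ)) k
        rw [← hEdef] at this
        rw [Prod.ext_iff]
        constructor
        · simp [Prod.smul_def, smul_eq_mul, this]; ring
        · simp [Prod.smul_def, smul_eq_mul, this]; ring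
      refine ⟨hodd', ?_⟩
      have he := heven (2*k+2) (by omega) ⟨k+1, by ring⟩
      have hre2 : 2*k+2+1 = 2*(k+1)+1 := by ring
      rw [hre2] at he
      rw [show 2*(k+1)+2 = 2*k+2+2 by ring, he, ih2, hodd']
      have := eseq_rec ((a:ℝ)*(b:ℝ)) k
      rw [← hEdef] at this
      rw [Prod.ext_iff]
      constructor
      · simp [Prod.smul_def, smul_eq_mul, this]; ring
      · simp [Prod.smul_def, smul_eq_mul, this]; ring
  -- square root facts
  have hs0 : 0 ≤ Real.sqrt ((a:ℝ)*(b:ℝ)*((a:ℝ)*(b:ℝ)-4)) := Real.sqrt_nonneg _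
  have hs2 : Real.sqrt ((a:ℝ)*(b:ℝ)*((a:ℝ)*(b:ℝ)-4))^2 = (a:ℝ)*(b:ℝ)*((a:ℝ)*(b:ℝ)-4) :=
    Real.sq_sqrt (by nlinarith)
  set s := Real.sqrt ((a:ℝ)*(b:ℝ)*((a:ℝ)*(b:ℝ)-4)) with hsdef
  have hslt : s < (a:ℝ)*(b:ℝ) - 2 := by nlinarith
  set μ := ((a:ℝ)*(b:ℝ) - 2 - s)/2 with hμdef
  have hμpos : 0 < μ := by rw [hμdef]; linarith
  have hμeq : μ^2 - ((a:ℝ)*(b:ℝ)-2)*μ + 1 = 0 := by rw [hμdef]; nlinarith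
  have hrt : Tendsto (fun k => E k / E (k+1)) atTop (nhds μ) := by
    have := ratio_tendsto ((a:ℝ)*(b:ℝ)) hc
    rw [← hEdef, ← hsdef, ← hμdef] at this
    exact this
  have hEpos : ∀ k, 0 < E (k+1) := fun k => by
    have := (eseq_bounds ((a:ℝ)*(b:ℝ)) hc k).1
    rw [← hEdef] at this; exact this
  -- odd subsequence
  have hdenne : ((a:ℝ)*(b:ℝ)-1)*μ - 1 ≠ 0 := by
    have : 0 < ((a:ℝ)*(b:ℝ)-1)*μ - 1 := by nlinarith
    exact this.ne'
  have ho : Tendsto (fun k => (g (2*k+1)).2 / (g (2*k+1)).1) atTop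
      (nhds (-(((a:ℝ)*(b:ℝ) + s) / (2*(b:ℝ))))) := by
    have hform : ∀ k, (g (2*k+1)).2 / (g (2*k+1)).1
        = (-(a:ℝ) * (E k / E (k+1))) / (((a:ℝ)*(b:ℝ)-1) * (E k / E (k+1)) - 1) := by
      intro k
      rw [(hg k).1]
      have he1 : E (k+1) ≠ 0 := (hEpos k).ne'
      rw [show -(a:ℝ) * (E k / E (k+1)) = (-(a:ℝ) * E k) / E (k+1) by ring,
        show ((a:ℝ)*(b:ℝ)-1) * (E k / E (k+1)) - 1
            = (((a:ℝ)*(b:ℝ)-1) * E k - E (k+1)) / E (k+1) by field_simp,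
        div_div_same' _ _ _ he1]
    have hlim : Tendsto (fun k => (-(a:ℝ) * (E k / E (k+1))) /
        (((a:ℝ)*(b:ℝ)-1) * (E k / E (k+1)) - 1)) atTop
        (nhds ((-(a:ℝ) * μ) / (((a:ℝ)*(b:ℝ)-1) * μ - 1))) :=
      Tendsto.div (hrt.const_mul _) ((hrt.const_mul _).sub_const 1) hdenne
    have hval : (-(a:ℝ) * μ) / (((a:ℝ)*(b:ℝ)-1) * μ - 1)
        = -(((a:ℝ)*(b:ℝ) + s) / (2*(b:ℝ))) := by
      have key : (-(a:ℝ) * μ) * (2*(b:ℝ))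
          = -((a:ℝ)*(b:ℝ) + s) * ((((a:ℝ)*(b:ℝ)-1)) * μ - 1) := by
        rw [hμdef]
        linear_combination (-(((a:ℝ)*(b:ℝ)-1))/2) * hs2
      rw [← neg_div, div_eq_div_iff hdenne (by positivity)]
      linear_combination key
    rw [← hval]
    exact hlim.congr (fun k => (hform k).symm)
  -- even subsequence
  have hdenne2 : (b:ℝ)*μ ≠ 0 := by positivity
  have he : Tendsto (fun k => (g (2*k+2)).2 / (g (2*k+2)).1) atTop
      (nhds (-(((a:ℝ)*(b:ℝ) + s) / (2*(b:ℝ))))) := by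
    have hform : ∀ k, (g (2*k+2)).2 / (g (2*k+2)).1
        = (-(E k / E (k+1)) - 1) / ((b:ℝ) * (E k / E (k+1))) := by
      intro k
      rw [(hg k).2]
      have he1 : E (k+1) ≠ 0 := (hEpos k).ne'
      rw [show -(E k / E (k+1)) - 1 = (-E k - E (k+1)) / E (k+1) by field_simp,
        show (b:ℝ) * (E k / E (k+1)) = ((b:ℝ) * E k) / E (k+1) by ring,
        div_div_same' _ _ _ he1]
    have hlim : Tendsto (fun k => (-(E k / E (k+1)) - 1) / ((b:ℝ) * (E k / E (k+1)))) atTop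
        (nhds ((-μ - 1) / ((b:ℝ) * μ))) :=
      Tendsto.div (hrt.neg.sub_const 1) (hrt.const_mul _) hdenne2
    have hval : (-μ - 1) / ((b:ℝ) * μ) = -(((a:ℝ)*(b:ℝ) + s) / (2*(b:ℝ))) := by
      have key : (-μ - 1) * (2*(b:ℝ)) = -((a:ℝ)*(b:ℝ) + s) * ((b:ℝ) * μ) := by
        rw [hμdef]
        linear_combination (-((b:ℝ))/2) * hs2
      rw [show -(((a:ℝ)*(b:ℝ) + s) / (2*(b:ℝ))) = (-((a:ℝ)*(b:ℝ) + s)) / (2*(b:ℝ)) by ring,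
        div_eq_div_iff hdenne2 (by positivity)]
      linear_combination key
    rw [← hval]
    exact hlim.congr (fun k => (hform k).symm)
  -- combine
  have hgoal : Tendsto (fun m : ℕ => (g m).2 / (g m).1) atTop
      (nhds (-(((a:ℝ)*(b:ℝ) + s) / (2*(b:ℝ))))) := by
    rw [Metric.tendsto_atTop] at ho he ⊢
    intro ε hε
    obtain ⟨N1, hN1⟩ := ho ε hε
    obtain ⟨N2, hN2⟩ := he ε hε
    refine ⟨2*N1 + 2*N2 + 2, fun n hn => ?_⟩
    rcases Nat.even_or_odd n with ⟨k, hk⟩ | ⟨k, hk⟩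
    · have hk1 : 1 ≤ k := by omega
      have hidx : n = 2*(k-1)+2 := by omega
      rw [hidx]
      exact hN2 (k-1) (by omega)
    · have hidx : n = 2*k+1 := by omega
      rw [hidx]
      exact hN1 k (by omega)
  exact hgoal
end

section
/- Let a, b be positive integers with ab ≥ 4 and define g'_m = (α'_m, β'_m) by g'_1 = (b, -1), g'_2 = (ab-1, -a), g'_{m+2} = -g'_m + b·g'_{m+1} for m odd, g'_{m+2} = -g'_m + a·g'_{m+1} for m even. Then the slopes β'_m/α'_m converge to -(ab - √(ab(ab-4)))/(2b) = -2a/(ab + √(ab(ab-4))) as m → ∞. -/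
open Filter Real

noncomputable def useq (c : ℝ) : ℕ → ℝ
  | 0 => 0
  | 1 => 1
  | (k+2) => c * useq c (k+1) - useq c k

lemma useq_zero (c : ℝ) : useq c 0 = 0 := rfl
lemma useq_one (c : ℝ) : useq c 1 = 1 := rfl
lemma useq_rec (c : ℝ) (k : ℕ) : useq c (k+2) = c * useq c (k+1) - useq c k := rfl

lemma useq_pos_mono (c : ℝ) (hc : 2 ≤ c) :
    ∀ k, 1 ≤ useq c (k+1) ∧ useq c k ≤ useq c (k+1) := by
  intro k
  induction k with
  | zero => simp [useq_zero, useq_one]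
  | succ n ih =>
    obtain ⟨h1, h2⟩ := ih
    have h0 : (0:ℝ) ≤ useq c (n+1) := by linarith
    have : useq c (n+1) ≤ useq c (n+2) := by
      rw [useq_rec]
      nlinarith
    exact ⟨le_trans h1 this, this⟩

lemma useq_ratio_tendsto (c : ℝ) (hc : 2 ≤ c) :
    Tendsto (fun k => useq c k / useq c (k+1)) atTop
      (nhds ((c - Real.sqrt (c^2 - 4))/2)) := by
  have hD : (0:ℝ) ≤ c^2 - 4 := by nlinarith
  set s := Real.sqrt (c^2 - 4) with hs_def
  have hs2 : s^2 = c^2 - 4 := Real.sq_sqrt hD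
  have hs0 : 0 ≤ s := Real.sqrt_nonneg _
  have hsc : s ≤ c := by nlinarith
  set lam := (c + s)/2 with hlam
  set mu := (c - s)/2 with hmu
  have hlammu : lam * mu = 1 := by
    rw [hlam, hmu]; nlinarith
  have hlam1 : 1 ≤ lam := by rw [hlam]; linarith
  have hmulam : mu ≤ lam := by rw [hlam, hmu]; linarith
  have hlam0 : (0:ℝ) < lam := by linarith
  have hsum : lam + mu = c := by rw [hlam, hmu]; ring
  have hpos : ∀ k, (0:ℝ) < useq c (k+1) := fun k => by
    have := (useq_pos_mono c hc k).1; linarith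
  set ρ : ℕ → ℝ := fun k => useq c (k+2) / useq c (k+1) with hρ
  have hρrec : ∀ k, ρ (k+1) = c - 1 / ρ k := by
    intro k
    have h1 := (hpos k).ne'
    have h2 := (hpos (k+1)).ne'
    rw [hρ]
    simp only
    rw [useq_rec c (k+1)]
    field_simp
  have hρge : ∀ k, lam ≤ ρ k := by
    intro k
    induction k with
    | zero =>
      have : ρ 0 = c := by
        rw [hρ]; simp [useq_rec, useq_zero, useq_one]
      rw [this]; linarith
    | succ n ih =>
      have hρn0 : (0:ℝ) < ρ n := lt_of_lt_of_le hlam0 ih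
      have hinv : 1 / ρ n ≤ 1 / lam := by
        apply one_div_le_one_div_of_le hlam0 ih
      have hinvlam : 1 / lam = mu := by
        field_simp; linarith [hlammu]
      rw [hρrec n]
      rw [hinvlam] at hinv
      have : c - mu = lam := by rw [hlam, hmu]; ring
      linarith
  have hanti : Antitone ρ := by
    apply antitone_nat_of_succ_le
    intro n
    have hρn : lam ≤ ρ n := hρge n
    have hρn0 : (0:ℝ) < ρ n := lt_of_lt_of_le hlam0 hρn
    rw [hρrec n]
    have key : (ρ n - lam) * (ρ n - mu) ≥ 0 := by
      apply mul_nonneg <;> linarith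
    have hinv : (1 / ρ n) * ρ n = 1 := by field_simp
    nlinarith [hlammu, key, hinv, hsum, hρn0]
  have hbdd : BddBelow (Set.range ρ) := by
    refine ⟨lam, ?_⟩
    rintro x ⟨k, rfl⟩
    exact hρge k
  have hρtend : Tendsto ρ atTop (nhds (⨅ i, ρ i)) := tendsto_atTop_ciInf hanti hbdd
  set l := ⨅ i, ρ i with hl
  have hllam : lam ≤ l := le_ciInf hρge
  have hl0 : l ≠ 0 := ne_of_gt (lt_of_lt_of_le hlam0 hllam)
  have hfix : l = c - 1/l := by
    have h1 : Tendsto (fun k => ρ (k+1)) atTop (nhds l) :=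
      hρtend.comp (Filter.tendsto_add_atTop_nat 1)
    have h2 : Tendsto (fun k => c - 1/ρ k) atTop (nhds (c - 1/l)) := by
      have := hρtend.inv₀ hl0
      have := this.const_sub c
      simpa [one_div] using this
    have h3 : (fun k => ρ (k+1)) = fun k => c - 1/ρ k := funext hρrec
    rw [h3] at h1
    exact tendsto_nhds_unique h1 h2
  have hleq : l = lam := by
    have hl0' : (0:ℝ) < l := lt_of_lt_of_le hlam0 hllam
    have hquad : l^2 - c*l + 1 = 0 := by
      have := hfix
      field_simp at this
      nlinarith
    have hfact : (l - lam) * (l - mu) = 0 := by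
      have hsum : lam + mu = c := by rw [hlam, hmu]; ring
      nlinarith
    rcases mul_eq_zero.mp hfact with h | h
    · linarith
    · -- l = mu ≤ lam ≤ l
      have : l = mu := by linarith
      linarith
  -- now u_k / u_{k+1} for k+1 is 1/ρ k
  have hinvlam : 1 / lam = mu := by
    field_simp; linarith [hlammu]
  have hfinal : Tendsto (fun k => useq c (k+1) / useq c (k+2)) atTop (nhds mu) := by
    have h1 : Tendsto (fun k => (ρ k)⁻¹) atTop (nhds lam⁻¹) := by
      rw [hleq] at hρtend
      exact hρtend.inv₀ (ne_of_gt hlam0)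
    have h2 : (fun k => (ρ k)⁻¹) = fun k => useq c (k+1) / useq c (k+2) := by
      funext k
      rw [hρ]
      simp [inv_div]
    rw [h2] at h1
    have : lam⁻¹ = mu := by rw [← hinvlam, one_div]
    rwa [this] at h1
  exact (Filter.tendsto_add_atTop_iff_nat 1).mp hfinal

theorem stmt_8 (a b : ℤ) (ha : 0 < a) (hb : 0 < b) (hab : 4 ≤ a * b)
    (g' : ℕ → ℝ × ℝ)
    (h1 : g' 1 = ((b : ℝ), -1)) (h2 : g' 2 = ((a : ℝ) * b - 1, -(a : ℝ)))
    (hodd : ∀ m, 1 ≤ m → Odd m → g' (m + 2) = -g' m + (b : ℝ) • g' (m + 1))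
    (heven : ∀ m, 1 ≤ m → Even m → g' (m + 2) = -g' m + (a : ℝ) • g' (m + 1)) :
    Filter.Tendsto (fun m : ℕ => (g' m).2 / (g' m).1) Filter.atTop
      (nhds (-(((a : ℝ) * b - Real.sqrt ((a * b) * (a * b - 4))) / (2 * b)))) ∧
    -(((a : ℝ) * b - Real.sqrt ((a * b) * (a * b - 4))) / (2 * b)) =
      -(2 * (a : ℝ) / ((a : ℝ) * b + Real.sqrt ((a * b) * (a * b - 4)))) := by
  have hA : (0:ℝ) < (a:ℝ) := by exact_mod_cast ha
  have hB : (0:ℝ) < (b:ℝ) := by exact_mod_cast hb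
  have hAB : (4:ℝ) ≤ (a:ℝ) * (b:ℝ) := by exact_mod_cast hab
  set c : ℝ := (a:ℝ) * (b:ℝ) - 2 with hC
  have hc : 2 ≤ c := by rw [hC]; linarith
  have hD : (0:ℝ) ≤ c^2 - 4 := by nlinarith
  have harg : ((a:ℝ) * b) * ((a:ℝ) * b - 4) = c^2 - 4 := by rw [hC]; ring
  set s : ℝ := Real.sqrt (c^2 - 4) with hs_def
  have hs2 : s^2 = c^2 - 4 := Real.sq_sqrt hD
  have hs0 : 0 ≤ s := Real.sqrt_nonneg _
  have hsc : s ≤ c := by nlinarith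
  -- the sqrt in the statement equals s
  have hsqrt : Real.sqrt (((a:ℝ) * b) * ((a:ℝ) * b - 4)) = s := by
    rw [hs_def, harg]
  -- positivity facts about useq
  have hupos : ∀ k, (0:ℝ) < useq c (k+1) := fun k => by
    have := (useq_pos_mono c hc k).1; linarith
  have humono : ∀ k, useq c k ≤ useq c (k+1) := fun k => (useq_pos_mono c hc k).2
  have hunneg : ∀ k, (0:ℝ) ≤ useq c k := by
    intro k
    cases k with
    | zero => simp [useq_zero]
    | succ n => exact le_of_lt (hupos n)
  -- closed form
  have key : ∀ k : ℕ, g' (2*k+1) = ((b:ℝ) * useq c (k+1), -(useq c (k+1) + useq c k)) ∧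
      g' (2*k+2) = ((c+1) * useq c (k+1) - useq c k, -((a:ℝ) * useq c (k+1))) := by
    intro k
    induction k with
    | zero =>
      constructor
      · show g' 1 = _
        rw [h1, useq_one, useq_zero]
        simp
      · show g' 2 = _
        rw [h2, useq_one, useq_zero, Prod.mk.injEq]
        constructor
        · rw [hC]; ring
        · ring
    | succ n ih =>
      obtain ⟨hO, hE⟩ := ih
      have e3 : g' (2*n+3) = -g' (2*n+1) + (b:ℝ) • g' (2*n+2) := by
        have := hodd (2*n+1) (by omega) ⟨n, by ring⟩
        convert this using 2 <;> omega
      have e4 : g' (2*n+4) = -g' (2*n+2) + (a:ℝ) • g' (2*n+3) := by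
        have := heven (2*n+2) (by omega) ⟨n+1, by ring⟩
        convert this using 2 <;> omega
      rw [hO, hE] at e3
      have e3' : g' (2*n+3) = ((b:ℝ) * useq c (n+2), -(useq c (n+2) + useq c (n+1))) := by
        rw [e3]
        simp only [Prod.smul_mk, smul_eq_mul, Prod.neg_mk, Prod.mk_add_mk, Prod.mk.injEq]
        rw [useq_rec c n]
        constructor
        · rw [hC]; ring
        · rw [hC]; ring
      rw [e3', hE] at e4
      have e4' : g' (2*n+4) = ((c+1) * useq c (n+2) - useq c (n+1), -((a:ℝ) * useq c (n+2))) := by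
        rw [e4]
        simp only [Prod.smul_mk, smul_eq_mul, Prod.neg_mk, Prod.mk_add_mk, Prod.mk.injEq]
        rw [useq_rec c n]
        constructor
        · rw [hC]; ring
        · rw [hC]; ring
      constructor
      · show g' (2*n+3) = _
        rw [e3']
      · show g' (2*n+4) = _
        rw [e4']
  -- ratio limit
  have ht := useq_ratio_tendsto c hc
  rw [← hs_def] at ht
  set μ : ℝ := (c - s)/2 with hμ_def
  have hμ0 : 0 ≤ μ := by rw [hμ_def]; linarith
  have hμ1 : μ ≤ c/2 := by rw [hμ_def]; linarith
  -- target limit value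
  set L : ℝ := -(((a : ℝ) * b - Real.sqrt ((a * b) * (a * b - 4))) / (2 * b)) with hL
  have hL' : L = -((1 + μ)/(b:ℝ)) := by
    rw [hL, hsqrt, hμ_def, hC]
    field_simp
    ring
  -- odd subsequence limit
  have hoddfun : (fun k : ℕ => (g' (2*k+1)).2 / (g' (2*k+1)).1)
      = fun k => -((1 + useq c k / useq c (k+1)) / (b:ℝ)) := by
    funext k
    rw [(key k).1]
    show -(useq c (k+1) + useq c k) / ((b:ℝ) * useq c (k+1)) = _
    have h := (hupos k).ne'
    have hbne := hB.ne'
    rw [neg_div, neg_inj, div_eq_div_iff (mul_ne_zero hbne h) hbne]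
    have e : useq c k / useq c (k+1) * useq c (k+1) = useq c k := div_mul_cancel₀ _ h
    linear_combination (-(b:ℝ)) * e
  have hoddlim : Filter.Tendsto (fun k : ℕ => (g' (2*k+1)).2 / (g' (2*k+1)).1)
      Filter.atTop (nhds L) := by
    rw [hoddfun, hL']
    exact (((tendsto_const_nhds.add ht).div_const _).neg)
  -- even subsequence limit
  have hden : ∀ k, (0:ℝ) < (c+1) * useq c (k+1) - useq c k := by
    intro k
    have h1 := hupos k
    have h2 := humono k
    nlinarith
  have hevenfun : (fun k : ℕ => (g' (2*k+2)).2 / (g' (2*k+2)).1)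
      = fun k => -((a:ℝ) / ((c+1) - useq c k / useq c (k+1))) := by
    funext k
    rw [(key k).2]
    show -((a:ℝ) * useq c (k+1)) / ((c+1) * useq c (k+1) - useq c k) = _
    have h := (hupos k).ne'
    have h2 := (hden k).ne'
    have h3 : (c + 1) - useq c k / useq c (k+1) ≠ 0 := by
      rw [sub_ne_zero]
      intro hcon
      apply h2
      rw [eq_comm, div_eq_iff h] at hcon
      linarith [hcon]
    field_simp
  have hμden : (0:ℝ) < (c+1) - μ := by linarith
  have hkey : (1+μ) * ((c+1) - μ) = (a:ℝ) * b := by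
    rw [hμ_def]
    linear_combination hC - (1/4 : ℝ) * hs2
  have hL'' : L = -((a:ℝ) / ((c+1) - μ)) := by
    rw [hL']
    rw [neg_inj, div_eq_div_iff hB.ne' (ne_of_gt hμden)]
    linear_combination hkey
  have hevenlim : Filter.Tendsto (fun k : ℕ => (g' (2*k+2)).2 / (g' (2*k+2)).1)
      Filter.atTop (nhds L) := by
    rw [hevenfun, hL'']
    exact (Filter.Tendsto.div tendsto_const_nhds (tendsto_const_nhds.sub ht)
      (ne_of_gt hμden)).neg
  constructor
  · rw [Metric.tendsto_atTop]
    intro ε hε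
    obtain ⟨N1, hN1⟩ := Metric.tendsto_atTop.mp hoddlim ε hε
    obtain ⟨N2, hN2⟩ := Metric.tendsto_atTop.mp hevenlim ε hε
    refine ⟨2 * max N1 N2 + 2, ?_⟩
    intro m hm
    rcases Nat.even_or_odd m with he | ho
    · obtain ⟨r, hr⟩ := he
      have hm2 : m = 2*(r-1)+2 := by omega
      have hge : N2 ≤ r - 1 := by omega
      rw [hm2]
      exact hN2 _ hge
    · obtain ⟨r, hr⟩ := ho
      have hge : N1 ≤ r := by omega
      rw [hr]
      exact hN1 _ hge
  · -- algebra for the second part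
    rw [hL, hsqrt]
    have hABs : (0:ℝ) < (a:ℝ) * b + s := by nlinarith
    rw [neg_inj, div_eq_div_iff (by positivity) (ne_of_gt hABs)]
    linear_combination -hs2 - (c + (a:ℝ)*b - 2) * hC
end

section
/- Let a, b be positive integers with ab ≥ 4, and let c₀ < 0, d₀ > 0 be integers. Then -d₀/c₀ > (ab + √(ab(ab-4)))/(2a) if and only if both ab·c₀·d₀ + a·d₀² + b·c₀² > 0 and 2d₀ + b·c₀ > 0 hold. -/
theorem stmt_10 (a b c₀ d₀ : ℤ) (ha : 0 < a) (hb : 0 < b) (hab : 4 ≤ a * b)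
    (hc : c₀ < 0) (hd : 0 < d₀) :
    ((a : ℝ) * b + Real.sqrt ((a * b) * (a * b - 4))) / (2 * a) < -(d₀ : ℝ) / c₀ ↔
    (0 < a * b * c₀ * d₀ + a * d₀ ^ 2 + b * c₀ ^ 2 ∧ 0 < 2 * d₀ + b * c₀) := by
  have hA : (0:ℝ) < a := by exact_mod_cast ha
  have hB : (0:ℝ) < b := by exact_mod_cast hb
  have hAB : (4:ℝ) ≤ (a:ℝ) * b := by exact_mod_cast hab
  have hC : (c₀:ℝ) < 0 := by exact_mod_cast hc
  have hD : (0:ℝ) < (d₀:ℝ) := by exact_mod_cast hd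
  set s := Real.sqrt (((a:ℝ) * b) * ((a:ℝ) * b - 4)) with hs_def
  have hs0 : 0 ≤ s := Real.sqrt_nonneg _
  have hs2 : s ^ 2 = ((a:ℝ) * b) * ((a:ℝ) * b - 4) :=
    Real.sq_sqrt (by nlinarith)
  have hneg : -(d₀:ℝ) / c₀ = (d₀:ℝ) / (-c₀) := by
    rw [neg_div, div_neg]
  have hcross : (((a:ℝ) * b + s) / (2 * a) < -(d₀:ℝ) / c₀) ↔
      ((a:ℝ) * b + s) * (-c₀) < (d₀:ℝ) * (2 * a) := by
    rw [hneg, div_lt_div_iff₀ (by positivity) (by linarith)]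
  rw [hcross]
  constructor
  · intro h
    have hR : 0 < 2 * (a:ℝ) * d₀ + a * b * c₀ := by nlinarith
    have h1 : s * (-(c₀:ℝ)) < 2 * a * d₀ + a * b * c₀ := by nlinarith
    have hsq : (s * (-(c₀:ℝ))) ^ 2 < (2 * a * d₀ + a * b * c₀) ^ 2 := by
      have hn : (0:ℝ) ≤ s * (-(c₀:ℝ)) := mul_nonneg hs0 (by linarith)
      nlinarith [mul_pos (sub_pos.2 h1) (by linarith : (0:ℝ) < 2 * a * d₀ + a * b * c₀ + s * (-(c₀:ℝ)))]
    constructor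
    · have : (0:ℝ) < a * b * c₀ * d₀ + a * d₀ ^ 2 + b * c₀ ^ 2 := by nlinarith
      exact_mod_cast this
    · have : (0:ℝ) < 2 * d₀ + b * c₀ := by nlinarith
      exact_mod_cast this
  · rintro ⟨h1, h2⟩
    have h1' : (0:ℝ) < a * b * c₀ * d₀ + a * d₀ ^ 2 + b * c₀ ^ 2 := by exact_mod_cast h1
    have h2' : (0:ℝ) < 2 * d₀ + b * c₀ := by exact_mod_cast h2
    have hR : 0 < 2 * (a:ℝ) * d₀ + a * b * c₀ := by nlinarith
    have hsq : (s * (-(c₀:ℝ))) ^ 2 < (2 * a * d₀ + a * b * c₀) ^ 2 := by nlinarith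
    have h1'' : s * (-(c₀:ℝ)) < 2 * a * d₀ + a * b * c₀ :=
      lt_of_pow_lt_pow_left₀ 2 hR.le hsq
    nlinarith
end

section
/- Let a, b be positive integers with ab ≥ 4, and let c₀ < 0, d₀ > 0 be integers. Then -d₀/c₀ < (ab - √(ab(ab-4)))/(2a) if and only if both ab·c₀·d₀ + a·d₀² + b·c₀² > 0 and 2d₀ + b·c₀ < 0 hold. -/
theorem stmt_11 (a b c₀ d₀ : ℤ) (ha : 0 < a) (hb : 0 < b) (hab : 4 ≤ a * b)
    (hc : c₀ < 0) (hd : 0 < d₀) :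
    -(d₀ : ℝ) / c₀ < ((a : ℝ) * b - Real.sqrt ((a * b) * (a * b - 4))) / (2 * a) ↔
    (0 < a * b * c₀ * d₀ + a * d₀ ^ 2 + b * c₀ ^ 2 ∧ 2 * d₀ + b * c₀ < 0) := by
  have ha' : (0:ℝ) < a := by exact_mod_cast ha
  have hc' : (c₀:ℝ) < 0 := by exact_mod_cast hc
  have hd' : (0:ℝ) < d₀ := by exact_mod_cast hd
  have hab' : (4:ℝ) ≤ (a:ℝ) * b := by exact_mod_cast hab
  have hnc : (0:ℝ) ≤ -c₀ := by linarith
  set s : ℝ := Real.sqrt ((a:ℝ) * b * ((a:ℝ) * b - 4)) with hs_def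
  have hs0 : 0 ≤ s := Real.sqrt_nonneg _
  have hs2 : s ^ 2 = (a:ℝ) * b * ((a:ℝ) * b - 4) := Real.sq_sqrt (by nlinarith)
  have hstep1 : (-(d₀:ℝ) / c₀ < ((a:ℝ) * b - s) / (2 * a)) ↔
      (d₀:ℝ) * (2 * a) < ((a:ℝ) * b - s) * (-c₀) := by
    rw [show -(d₀:ℝ)/c₀ = (d₀:ℝ)/(-c₀) by rw [div_neg, neg_div]]
    exact div_lt_div_iff₀ (by linarith) (by linarith)
  rw [hstep1]
  constructor
  · intro h
    have h1 : s * (-c₀) < -((a:ℝ) * b * c₀) - 2 * a * d₀ := by nlinarith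
    have ht : (0:ℝ) < -((a:ℝ) * b * c₀) - 2 * a * d₀ :=
      lt_of_le_of_lt (mul_nonneg hs0 hnc) h1
    have hsq : s ^ 2 * c₀ ^ 2 < (-((a:ℝ) * b * c₀) - 2 * a * d₀) ^ 2 := by
      nlinarith [mul_nonneg hs0 hnc]
    constructor
    · have : (0:ℝ) < (a:ℝ) * b * c₀ * d₀ + a * d₀ ^ 2 + b * c₀ ^ 2 := by nlinarith
      exact_mod_cast this
    · have : 2 * (d₀:ℝ) + b * c₀ < 0 := by nlinarith
      exact_mod_cast this
  · rintro ⟨hP, hQ⟩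
    have hP' : (0:ℝ) < (a:ℝ) * b * c₀ * d₀ + a * d₀ ^ 2 + b * c₀ ^ 2 := by exact_mod_cast hP
    have hQ' : 2 * (d₀:ℝ) + b * c₀ < 0 := by exact_mod_cast hQ
    have ht : (0:ℝ) < -((a:ℝ) * b * c₀) - 2 * a * d₀ := by nlinarith
    have hsq : s ^ 2 * c₀ ^ 2 < (-((a:ℝ) * b * c₀) - 2 * a * d₀) ^ 2 := by nlinarith
    have h1 : s * (-c₀) < -((a:ℝ) * b * c₀) - 2 * a * d₀ := by
      nlinarith [mul_nonneg hs0 hnc]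
    nlinarith
end

section
/- Let p_1, p_1', p_2, p_2', p_3, p_3' be positive integers satisfying p_1·p_2·p_3 = p_1'·p_2'·p_3' and p_i·p_i' ≥ 4 for i = 1,2,3 (totally-infinite cyclic case), and let A = p_1·p_2·p_3. If 2·p_1·p_1' > A, then p_2·p_2' + p_3·p_3' ≤ A, i.e., the vertex v_1 satisfies the Type 4-1 condition. -/
theorem stmt_13 (p₁ p₁' p₂ p₂' p₃ p₃' : ℤ)
    (h1 : 0 < p₁) (h1' : 0 < p₁') (h2 : 0 < p₂) (h2' : 0 < p₂')
    (h3 : 0 < p₃) (h3' : 0 < p₃')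
    (hprod : p₁ * p₂ * p₃ = p₁' * p₂' * p₃')
    (hi1 : 4 ≤ p₁ * p₁') (hi2 : 4 ≤ p₂ * p₂') (hi3 : 4 ≤ p₃ * p₃')
    (h : p₁ * p₂ * p₃ < 2 * (p₁ * p₁')) :
    p₂ * p₂' + p₃ * p₃' ≤ p₁ * p₂ * p₃ := by
  have key : (p₂ * p₂') * (p₃ * p₃') * (p₁ * p₁') = (p₁ * p₂ * p₃) * (p₁ * p₂ * p₃) := by
    linear_combination (-(p₁ * p₂ * p₃)) * hprod
  have hApos : 0 < p₁ * p₂ * p₃ := by positivity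
  have hxy : (p₂ * p₂') * (p₃ * p₃') < 2 * (p₁ * p₂ * p₃) := by
    nlinarith [mul_pos (mul_pos h2 h2') (mul_pos h3 h3')]
  nlinarith [mul_nonneg (sub_nonneg.2 (by linarith : (2:ℤ) ≤ p₂ * p₂'))
      (sub_nonneg.2 (by linarith : (2:ℤ) ≤ p₃ * p₃'))]
end

section
/- Let p_1, p_1', p_2, p_2', p_3, p_3' be positive integers with p_1·p_2·p_3 = p_1'·p_2'·p_3' and p_i·p_i' ≥ 4 for all i, and set A = p_1·p_2·p_3. Then at least one of the following three inequalities holds: p_2·p_2' + p_3·p_3' ≤ A, p_3·p_3' + p_1·p_1' ≤ A, p_1·p_1' + p_2·p_2' ≤ A. (That is, at least one elementary vertex is of Type 4-1.) -/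
lemma key_14 (A q1 q2 q3 : ℤ) (hA : 0 < A) (hq2 : 4 ≤ q2) (hq3 : 4 ≤ q3)
    (heq : q1 * q2 * q3 = A * A) (hm2 : q2 ≤ q1) (hm3 : q3 ≤ q1) :
    q2 + q3 ≤ A := by
  by_contra h
  push_neg at h
  have hq1 : A < 2 * q1 := by linarith
  have hs : 2 * (q2 + q3) ≤ q2 * q3 := by nlinarith
  nlinarith [mul_le_mul_of_nonneg_left hs (by linarith : (0:ℤ) ≤ q1)]

theorem stmt_14 (p₁ p₁' p₂ p₂' p₃ p₃' : ℤ)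
    (h1 : 0 < p₁) (h1' : 0 < p₁') (h2 : 0 < p₂) (h2' : 0 < p₂')
    (h3 : 0 < p₃) (h3' : 0 < p₃')
    (hprod : p₁ * p₂ * p₃ = p₁' * p₂' * p₃')
    (hi1 : 4 ≤ p₁ * p₁') (hi2 : 4 ≤ p₂ * p₂') (hi3 : 4 ≤ p₃ * p₃') :
    p₂ * p₂' + p₃ * p₃' ≤ p₁ * p₂ * p₃ ∨
    p₃ * p₃' + p₁ * p₁' ≤ p₁ * p₂ * p₃ ∨
    p₁ * p₁' + p₂ * p₂' ≤ p₁ * p₂ * p₃ := by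
  have hApos : 0 < p₁ * p₂ * p₃ := by positivity
  have heq : (p₁ * p₁') * (p₂ * p₂') * (p₃ * p₃') = (p₁ * p₂ * p₃) * (p₁ * p₂ * p₃) := by
    linear_combination (-(p₁ * p₂ * p₃)) * hprod
  rcases le_total (p₁ * p₁') (p₂ * p₂') with h12 | h12 <;>
    rcases le_total (p₂ * p₂') (p₃ * p₃') with h23 | h23 <;>
    rcases le_total (p₁ * p₁') (p₃ * p₃') with h13 | h13
  -- case q1≤q2, q2≤q3, q1≤q3 : q3 max
  · exact Or.inr (Or.inr (key_14 _ _ _ _ hApos hi1 hi2 (by linear_combination heq) h13 h23))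
  -- q1≤q2, q2≤q3, q3≤q1 : then all equal-ish; q3≤q1≤q2 so q2 max
  · exact Or.inr (Or.inl (key_14 _ _ _ _ hApos hi3 hi1 (by linear_combination heq) (le_trans h13 h12) h12))
  -- q1≤q2, q3≤q2, q1≤q3 : q2 max
  · exact Or.inr (Or.inl (key_14 _ _ _ _ hApos hi3 hi1 (by linear_combination heq) h23 h12))
  -- q1≤q2, q3≤q2, q3≤q1 : q2 max
  · exact Or.inr (Or.inl (key_14 _ _ _ _ hApos hi3 hi1 (by linear_combination heq) h23 h12))
  -- q2≤q1, q2≤q3, q1≤q3 : q3 max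
  · exact Or.inr (Or.inr (key_14 _ _ _ _ hApos hi1 hi2 (by linear_combination heq) h13 h23))
  -- q2≤q1, q2≤q3, q3≤q1 : q1 max
  · exact Or.inl (key_14 _ _ _ _ hApos hi2 hi3 (by linear_combination heq) h12 h13)
  -- q2≤q1, q3≤q2, q1≤q3 : q3≤q2≤q1 and q1≤q3 ⇒ q1 max anyway
  · exact Or.inl (key_14 _ _ _ _ hApos hi2 hi3 (by linear_combination heq) h12 (le_trans h23 h12))
  -- q2≤q1, q3≤q2, q3≤q1 : q1 max
  · exact Or.inl (key_14 _ _ _ _ hApos hi2 hi3 (by linear_combination heq) h12 h13)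
end

section
/- Let p_1, p_1', p_2, p_2', p_3, p_3' be positive integers with p_1·p_2·p_3 = p_1'·p_2'·p_3' and p_i·p_i' ≥ 4 for all i, A = p_1·p_2·p_3. Suppose v_2 is the only vertex of Type 4-1, i.e., p_3·p_3' + p_1·p_1' ≤ A but p_2·p_2' + p_3·p_3' > A and p_1·p_1' + p_2·p_2' > A. Then 2·p_2·p_2' > A and 2·p_1·p_1' < A (so v_1 is of Type 4-2 and v_3 is of Type 4-3). -/
theorem stmt_15 (p₁ p₁' p₂ p₂' p₃ p₃' : ℤ)
    (h1 : 0 < p₁) (h1' : 0 < p₁') (h2 : 0 < p₂) (h2' : 0 < p₂')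
    (h3 : 0 < p₃) (h3' : 0 < p₃')
    (hprod : p₁ * p₂ * p₃ = p₁' * p₂' * p₃')
    (hi1 : 4 ≤ p₁ * p₁') (hi2 : 4 ≤ p₂ * p₂') (hi3 : 4 ≤ p₃ * p₃')
    (hv2 : p₃ * p₃' + p₁ * p₁' ≤ p₁ * p₂ * p₃)
    (hv1 : p₁ * p₂ * p₃ < p₂ * p₂' + p₃ * p₃')
    (hv3 : p₁ * p₂ * p₃ < p₁ * p₁' + p₂ * p₂') :
    p₁ * p₂ * p₃ < 2 * (p₂ * p₂') ∧ 2 * (p₁ * p₁') < p₁ * p₂ * p₃ := by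
  have key : (p₁ * p₁') * (p₂ * p₂') * (p₃ * p₃') = (p₁ * p₂ * p₃) * (p₁ * p₂ * p₃) := by
    nth_rewrite 2 [hprod]; ring
  set a := p₁ * p₁' with ha
  set b := p₂ * p₂' with hb
  set c := p₃ * p₃' with hc
  set A := p₁ * p₂ * p₃ with hA
  constructor
  · linarith
  · by_contra h
    push_neg at h
    have hba : a < b := by linarith
    have hba' : a + 1 ≤ b := hba
    have h4 : A * A < 4 * (a * b) := by nlinarith
    have : c < 4 := by nlinarith [mul_pos (lt_of_lt_of_le (by norm_num) hi1) (lt_of_lt_of_le (by norm_num) hi2)]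
    linarith
end
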